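/- Let p, q, m be integers with p ≥ 2, q ≤ −2, and p + 1 < m < 2p − 1. Then the set 𝒮 has maximum (pq + 2p − q)/(q(q+1)) and minimum (p+1)/(q+1); that is, both values lie in 𝒮, and every element x of 𝒮 satisfies (p+1)/(q+1) ≤ x ≤ (pq + 2p − q)/(q(q+1)). -/

import Mathlib

/-- The set `𝒜` of integer sequences `(a_k)_{k≥1}` (indexed here by `k : ℕ`, so `a k`
stands for `a_{k+1}`) with `|a_k| ≤ m - 1` and `∑_{k≥1} a_k p^{-k} = 1`. -/
def seqA (p m : ℤ) : Set (ℕ → ℤ) :=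
  {a | (∀ k, |a k| ≤ m - 1) ∧ HasSum (fun k => (a k : ℝ) * ((p : ℝ)⁻¹) ^ (k + 1)) 1}

/-- The set `ℬ` of integer sequences `(b_k)_{k≥1}` with `|b_k| ≤ m - 1` and
`∑_{k≥1} b_k p^{-k} = 0`. -/
def seqB (p m : ℤ) : Set (ℕ → ℤ) :=
  {b | (∀ k, |b k| ≤ m - 1) ∧ HasSum (fun k => (b k : ℝ) * ((p : ℝ)⁻¹) ^ (k + 1)) 0}

/-- `𝒮 = { ∑_{k≥1} a_k q^{-k} : (a_k) ∈ 𝒜 }`. -/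
def setS (p q m : ℤ) : Set ℝ :=
  {x | ∃ a ∈ seqA p m, HasSum (fun k => (a k : ℝ) * ((q : ℝ)⁻¹) ^ (k + 1)) x}

/-- `𝒮' = { ∑_{k≥1} k a_k p^{-k} : (a_k) ∈ 𝒜 }`. -/
def setS' (p m : ℤ) : Set ℝ :=
  {x | ∃ a ∈ seqA p m,
    HasSum (fun k => ((k + 1 : ℕ) : ℝ) * (a k : ℝ) * ((p : ℝ)⁻¹) ^ (k + 1)) x}

/-- `𝒬 = { ∑_{k≥1} b_k q^{-k} : (b_k) ∈ ℬ }`. -/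
def setQ (p q m : ℤ) : Set ℝ :=
  {x | ∃ b ∈ seqB p m, HasSum (fun k => (b k : ℝ) * ((q : ℝ)⁻¹) ^ (k + 1)) x}

/-- `𝒬' = { ∑_{k≥1} k b_k p^{-k} : (b_k) ∈ ℬ }`. -/
def setQ' (p m : ℤ) : Set ℝ :=
  {x | ∃ b ∈ seqB p m,
    HasSum (fun k => ((k + 1 : ℕ) : ℝ) * (b k : ℝ) * ((p : ℝ)⁻¹) ^ (k + 1)) x}

/-- Geometric series with a constant factor. -/
private lemma aux_geom {r : ℝ} (hr : |r| < 1) (c : ℝ) :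
    HasSum (fun n : ℕ => c * r ^ n) (c * (1 - r)⁻¹) :=
  (hasSum_geometric_of_norm_lt_one (by rwa [Real.norm_eq_abs])).mul_left c

/-- Alternating geometric series. -/
private lemma aux_alt {c : ℝ} (k : ℝ) (hc : |c| < 1) :
    HasSum (fun n : ℕ => k * (-1) ^ n * c ^ (n + 1)) (k * c * (1 + c)⁻¹) := by
  have h := aux_geom (r := -c) (by rwa [abs_neg]) (k * c)
  have hfe : (fun n : ℕ => k * c * (-c) ^ n) = fun n : ℕ => k * (-1) ^ n * c ^ (n + 1) := by
    funext n
    rw [neg_pow, pow_succ]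
    ring
  rw [hfe] at h
  rwa [sub_neg_eq_add] at h

/-- The remainder sequence of an expansion. -/
private def auxR (p : ℤ) (a : ℕ → ℤ) : ℕ → ℤ
  | 0 => 1
  | n + 1 => p * auxR p a n - a n

theorem stmt_5 (p q m : ℤ) (hp : 2 ≤ p) (hq : q ≤ -2)
    (hm1 : p + 1 < m) (hm2 : m < 2 * p - 1) :
    ((p : ℝ) * q + 2 * p - q) / ((q : ℝ) * ((q : ℝ) + 1)) ∈ setS p q m ∧
    ((p : ℝ) + 1) / ((q : ℝ) + 1) ∈ setS p q m ∧
    ∀ x ∈ setS p q m,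
      ((p : ℝ) + 1) / ((q : ℝ) + 1) ≤ x ∧
      x ≤ ((p : ℝ) * q + 2 * p - q) / ((q : ℝ) * ((q : ℝ) + 1)) := by
  have hpR : (2 : ℝ) ≤ (p : ℝ) := by exact_mod_cast hp
  have hqR : (q : ℝ) ≤ -2 := by exact_mod_cast hq
  set P : ℝ := (p : ℝ) with hPdef
  set Q : ℝ := (q : ℝ) with hQdef
  have hP0 : P ≠ 0 := by linarith
  have hQ0 : Q ≠ 0 := by linarith
  have hQ1 : Q + 1 ≤ -1 := by linarith
  have hQ1ne : Q + 1 ≠ 0 := by linarith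
  have hQinvneg : Q⁻¹ < 0 := inv_lt_zero.mpr (by linarith)
  have hQinvabs : |Q⁻¹| < 1 := by
    rw [abs_inv]
    rw [abs_of_nonpos (by linarith : Q ≤ 0)]
    rw [inv_lt_one_iff₀]
    right; linarith
  have hPinvabs : |P⁻¹| < 1 := by
    rw [abs_inv, abs_of_nonneg (by linarith : (0:ℝ) ≤ P), inv_lt_one_iff₀]
    right; linarith
  have hPinvpos : (0:ℝ) < P⁻¹ := inv_pos.mpr (by linarith)
  have h1Pinv : (0:ℝ) < 1 - P⁻¹ := by
    have := abs_lt.mp hPinvabs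
    linarith [this.2]
  have h1Qinv : (1:ℝ) + Q⁻¹ ≠ 0 := by
    have := abs_lt.mp hQinvabs
    nlinarith [this.1]
  have h1PinvNe : (1:ℝ) + P⁻¹ ≠ 0 := by positivity
  have hmP1 : p + 2 ≤ m := by omega
  have hmP2 : m ≤ 2 * p - 2 := by omega
  have hmR1 : P + 2 ≤ (m : ℝ) := by rw [hPdef]; exact_mod_cast hmP1
  have hmR2 : (m : ℝ) ≤ 2 * P - 2 := by rw [hPdef]; exact_mod_cast hmP2
  refine ⟨?_, ?_, ?_⟩
  · -- maximum is attained
    refine ⟨fun n => if n = 0 then p - 1 else (p + 1) * (-1) ^ (n + 1), ⟨?_, ?_⟩, ?_⟩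
    · intro k
      show |if k = 0 then p - 1 else (p + 1) * (-1) ^ (k + 1)| ≤ m - 1
      by_cases hk : k = 0
      · rw [if_pos hk, abs_of_nonneg (by omega : (0:ℤ) ≤ p - 1)]
        omega
      · rw [if_neg hk]
        rw [abs_mul, abs_pow, abs_neg, abs_one, one_pow, mul_one,
          abs_of_nonneg (by omega : (0:ℤ) ≤ p + 1)]
        omega
    · -- sums to 1 in base p
      have h1 := aux_alt (c := P⁻¹) ((P + 1) * P⁻¹) hPinvabs
      have h2 : HasSum (fun n : ℕ =>
          ((if n + 1 = 0 then ((p:ℤ) - 1) else ((p:ℤ) + 1) * (-1) ^ (n + 1 + 1) : ℤ) : ℝ)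
            * (P⁻¹) ^ (n + 1 + 1)) ((P + 1) * P⁻¹ * P⁻¹ * (1 + P⁻¹)⁻¹) := by
        have hfe : (fun n : ℕ =>
            ((if n + 1 = 0 then ((p:ℤ) - 1) else ((p:ℤ) + 1) * (-1) ^ (n + 1 + 1) : ℤ) : ℝ)
              * (P⁻¹) ^ (n + 1 + 1))
            = fun n : ℕ => (P + 1) * P⁻¹ * (-1) ^ n * (P⁻¹) ^ (n + 1) := by
          funext n
          simp only [Nat.succ_ne_zero, if_false]
          push_cast
          rw [show n + 1 + 1 = n + 2 from rfl, pow_add, pow_add]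
          ring
        rw [hfe]; exact h1
      have h3 := (hasSum_nat_add_iff (f := fun n : ℕ =>
          ((if n = 0 then ((p:ℤ) - 1) else ((p:ℤ) + 1) * (-1) ^ (n + 1) : ℤ) : ℝ)
            * (P⁻¹) ^ (n + 1)) 1).mp h2
      have h4 : ((P + 1) * P⁻¹ * P⁻¹ * (1 + P⁻¹)⁻¹ +
          ∑ i ∈ Finset.range 1,
            ((if i = 0 then ((p:ℤ) - 1) else ((p:ℤ) + 1) * (-1) ^ (i + 1) : ℤ) : ℝ)
              * (P⁻¹) ^ (i + 1)) = 1 := by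
        simp only [Finset.sum_range_one, if_pos rfl]
        push_cast
        field_simp
        ring
      rwa [h4] at h3
    · -- sums to the max in base q
      have h1 := aux_alt (c := Q⁻¹) ((P + 1) * Q⁻¹) hQinvabs
      have h2 : HasSum (fun n : ℕ =>
          ((if n + 1 = 0 then ((p:ℤ) - 1) else ((p:ℤ) + 1) * (-1) ^ (n + 1 + 1) : ℤ) : ℝ)
            * (Q⁻¹) ^ (n + 1 + 1)) ((P + 1) * Q⁻¹ * Q⁻¹ * (1 + Q⁻¹)⁻¹) := by
        have hfe : (fun n : ℕ =>
            ((if n + 1 = 0 then ((p:ℤ) - 1) else ((p:ℤ) + 1) * (-1) ^ (n + 1 + 1) : ℤ) : ℝ)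
              * (Q⁻¹) ^ (n + 1 + 1))
            = fun n : ℕ => (P + 1) * Q⁻¹ * (-1) ^ n * (Q⁻¹) ^ (n + 1) := by
          funext n
          simp only [Nat.succ_ne_zero, if_false]
          push_cast
          rw [show n + 1 + 1 = n + 2 from rfl, pow_add, pow_add]
          ring
        rw [hfe]; exact h1
      have h3 := (hasSum_nat_add_iff (f := fun n : ℕ =>
          ((if n = 0 then ((p:ℤ) - 1) else ((p:ℤ) + 1) * (-1) ^ (n + 1) : ℤ) : ℝ)
            * (Q⁻¹) ^ (n + 1)) 1).mp h2
      have h4 : ((P + 1) * Q⁻¹ * Q⁻¹ * (1 + Q⁻¹)⁻¹ +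
          ∑ i ∈ Finset.range 1,
            ((if i = 0 then ((p:ℤ) - 1) else ((p:ℤ) + 1) * (-1) ^ (i + 1) : ℤ) : ℝ)
              * (Q⁻¹) ^ (i + 1)) = (P * Q + 2 * P - Q) / (Q * (Q + 1)) := by
        simp only [Finset.sum_range_one, if_pos rfl]
        push_cast
        field_simp
        ring
      rwa [h4] at h3
  · -- minimum is attained
    refine ⟨fun n => (p + 1) * (-1) ^ n, ⟨?_, ?_⟩, ?_⟩
    · intro k
      simp only [abs_mul, abs_pow, abs_neg, abs_one, one_pow, mul_one]
      rw [abs_of_nonneg (by omega : (0:ℤ) ≤ p + 1)]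
      omega
    · have h1 := aux_alt (c := P⁻¹) (P + 1) hPinvabs
      have h2 : HasSum (fun n : ℕ => (((p + 1) * (-1) ^ n : ℤ) : ℝ) * (P⁻¹) ^ (n + 1))
          ((P + 1) * P⁻¹ * (1 + P⁻¹)⁻¹) := by
        have hfe : (fun n : ℕ => (((p + 1) * (-1) ^ n : ℤ) : ℝ) * (P⁻¹) ^ (n + 1))
            = fun n : ℕ => (P + 1) * (-1) ^ n * (P⁻¹) ^ (n + 1) := by
          funext n; push_cast; ring
        rw [hfe]; exact h1
      have h4 : (P + 1) * P⁻¹ * (1 + P⁻¹)⁻¹ = 1 := by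
        field_simp
      rwa [h4] at h2
    · have h1 := aux_alt (c := Q⁻¹) (P + 1) hQinvabs
      have h2 : HasSum (fun n : ℕ => (((p + 1) * (-1) ^ n : ℤ) : ℝ) * (Q⁻¹) ^ (n + 1))
          ((P + 1) * Q⁻¹ * (1 + Q⁻¹)⁻¹) := by
        have hfe : (fun n : ℕ => (((p + 1) * (-1) ^ n : ℤ) : ℝ) * (Q⁻¹) ^ (n + 1))
            = fun n : ℕ => (P + 1) * (-1) ^ n * (Q⁻¹) ^ (n + 1) := by
          funext n; push_cast; ring
        rw [hfe]; exact h1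
      have h4 : (P + 1) * Q⁻¹ * (1 + Q⁻¹)⁻¹ = (P + 1) / (Q + 1) := by
        field_simp
      rwa [h4] at h2
  · -- bounds
    rintro x ⟨a, ⟨habs, hsum1⟩, hx⟩
    set R : ℕ → ℤ := auxR p a with hRdef
    have hR0 : R 0 = 1 := rfl
    have hRrec : ∀ n, R (n + 1) = p * R n - a n := fun n => rfl
    have habsR : ∀ k, (|a k| : ℝ) ≤ (m : ℝ) - 1 := by
      intro k
      have := habs k
      exact_mod_cast this
    -- partial sums identity
    have hpart : ∀ n, ((R n : ℝ)) * P⁻¹ ^ n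
        = 1 - ∑ i ∈ Finset.range n, (a i : ℝ) * P⁻¹ ^ (i + 1) := by
      intro n
      induction n with
      | zero => simp [hR0]
      | succ n ih =>
        rw [Finset.sum_range_succ, hRrec n]
        have hPP : P * P⁻¹ = 1 := mul_inv_cancel₀ hP0
        push_cast
        rw [pow_succ]
        linear_combination ((R n : ℝ) * P⁻¹ ^ n) * hPP + ih
    -- tail sums
    have htail : ∀ n, HasSum (fun k => (a (k + n) : ℝ) * P⁻¹ ^ (k + n + 1))
        ((R n : ℝ) * P⁻¹ ^ n) := by
      intro n
      rw [hpart n]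
      exact (hasSum_nat_add_iff' (f := fun k => (a k : ℝ) * P⁻¹ ^ (k + 1)) n).mpr hsum1
    -- |R n| ≤ 1
    have hR1 : ∀ n, |(R n : ℝ)| ≤ 1 := by
      intro n
      have hgeo := aux_geom hPinvabs (((m : ℝ) - 1) * P⁻¹ ^ (n + 1))
      have hterm : ∀ k, |(a (k + n) : ℝ) * P⁻¹ ^ (k + n + 1)|
          ≤ ((m : ℝ) - 1) * P⁻¹ ^ (n + 1) * P⁻¹ ^ k := by
        intro k
        rw [abs_mul, abs_pow, abs_of_nonneg (le_of_lt hPinvpos)]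
        rw [show k + n + 1 = (n + 1) + k from by omega, pow_add]
        have h1 : |(a (k + n) : ℝ)| ≤ (m : ℝ) - 1 := habsR (k + n)
        have h2 : (0:ℝ) ≤ P⁻¹ ^ (n + 1) * P⁻¹ ^ k := by positivity
        calc |(a (k + n) : ℝ)| * (P⁻¹ ^ (n + 1) * P⁻¹ ^ k)
            ≤ ((m : ℝ) - 1) * (P⁻¹ ^ (n + 1) * P⁻¹ ^ k) :=
              mul_le_mul_of_nonneg_right h1 h2
          _ = ((m : ℝ) - 1) * P⁻¹ ^ (n + 1) * P⁻¹ ^ k := by ring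
      have hup : (R n : ℝ) * P⁻¹ ^ n ≤ ((m : ℝ) - 1) * P⁻¹ ^ (n + 1) * (1 - P⁻¹)⁻¹ :=
        hasSum_le (fun k => le_trans (le_abs_self _) (hterm k)) (htail n) hgeo
      have hlo : -(((m : ℝ) - 1) * P⁻¹ ^ (n + 1) * (1 - P⁻¹)⁻¹) ≤ (R n : ℝ) * P⁻¹ ^ n := by
        refine hasSum_le (fun k => ?_) hgeo.neg (htail n)
        have := hterm k
        have := abs_le.mp this
        linarith [this.1]
      have habsRn : |(R n : ℝ) * P⁻¹ ^ n| ≤ ((m : ℝ) - 1) * P⁻¹ ^ (n + 1) * (1 - P⁻¹)⁻¹ :=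
        abs_le.mpr ⟨hlo, hup⟩
      have hpowpos : (0:ℝ) < P⁻¹ ^ n := by positivity
      have hC : |(R n : ℝ)| ≤ ((m : ℝ) - 1) * P⁻¹ * (1 - P⁻¹)⁻¹ := by
        have heq : ((m : ℝ) - 1) * P⁻¹ ^ (n + 1) * (1 - P⁻¹)⁻¹
            = (((m : ℝ) - 1) * P⁻¹ * (1 - P⁻¹)⁻¹) * P⁻¹ ^ n := by
          rw [pow_succ]; ring
        rw [abs_mul, abs_pow, abs_of_nonneg (le_of_lt hPinvpos)] at habsRn
        rw [heq] at habsRn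
        exact le_of_mul_le_mul_right (by linarith) hpowpos
      have hC2 : ((m : ℝ) - 1) * P⁻¹ * (1 - P⁻¹)⁻¹ < 2 := by
        rw [mul_inv_lt_iff₀ h1Pinv]
        have hPP : P * P⁻¹ = 1 := mul_inv_cancel₀ hP0
        nlinarith [hPinvpos]
      have : |(R n : ℝ)| < 2 := lt_of_le_of_lt hC hC2
      have hint : |R n| < 2 := by exact_mod_cast (by rwa [← Int.cast_abs] at this :
        ((|R n| : ℤ) : ℝ) < 2)
      have : |R n| ≤ 1 := by omega
      calc |(R n : ℝ)| = ((|R n| : ℤ) : ℝ) := by rw [Int.cast_abs]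
        _ ≤ 1 := by exact_mod_cast this
    -- the series in q
    set u : ℕ → ℝ := fun n => (R n : ℝ) * Q⁻¹ ^ n with hudef
    have hgB : HasSum (fun n : ℕ => (-Q⁻¹) ^ (n + 1)) (-1 / (Q + 1)) := by
      have h := aux_geom (r := -Q⁻¹) (by rwa [abs_neg]) (-Q⁻¹)
      have hfe : (fun n : ℕ => -Q⁻¹ * (-Q⁻¹) ^ n) = fun n : ℕ => (-Q⁻¹) ^ (n + 1) := by
        funext n; rw [pow_succ]; ring
      rw [hfe] at h
      have hval : -Q⁻¹ * (1 - -Q⁻¹)⁻¹ = -1 / (Q + 1) := by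
        rw [sub_neg_eq_add]
        field_simp
      rwa [hval] at h
    have hubound : ∀ n, |u (n + 1)| ≤ (-Q⁻¹) ^ (n + 1) := by
      intro n
      rw [hudef]
      simp only []
      rw [abs_mul, abs_pow, abs_of_nonpos (le_of_lt hQinvneg)]
      have h1 := hR1 (n + 1)
      have h2 : (0:ℝ) ≤ (-Q⁻¹) ^ (n + 1) := pow_nonneg (by linarith) _
      calc |(R (n + 1) : ℝ)| * (-Q⁻¹) ^ (n + 1) ≤ 1 * (-Q⁻¹) ^ (n + 1) :=
            mul_le_mul_of_nonneg_right h1 h2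
        _ = (-Q⁻¹) ^ (n + 1) := one_mul _
    have hsummable : Summable (fun n => u (n + 1)) := by
      refine Summable.of_norm_bounded hgB.summable ?_
      intro n
      rw [Real.norm_eq_abs]
      exact hubound n
    set s : ℝ := ∑' n, u (n + 1) with hsdef
    have hs : HasSum (fun n => u (n + 1)) s := hsummable.hasSum
    have hs_le : s ≤ -1 / (Q + 1) :=
      hasSum_le (fun n => le_trans (le_abs_self _) (hubound n)) hs hgB
    have hs_ge : -(-1 / (Q + 1)) ≤ s := by
      refine hasSum_le (fun n => ?_) hgB.neg hs
      have := abs_le.mp (hubound n)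
      linarith [this.1]
    have hu0 : u 0 = 1 := by rw [hudef]; simp [hR0]
    have hu : HasSum u (s + 1) := by
      have h := (hasSum_nat_add_iff (f := u) 1).mp hs
      have hsum01 : ∑ i ∈ Finset.range 1, u i = 1 := by
        rw [Finset.sum_range_one, hu0]
      rw [hsum01] at h
      exact h
    have hxs : HasSum (fun n => (a n : ℝ) * Q⁻¹ ^ (n + 1)) (P * Q⁻¹ * (s + 1) - s) := by
      have h2 := (hu.mul_left (P * Q⁻¹)).sub hs
      have hfe : (fun n => (a n : ℝ) * Q⁻¹ ^ (n + 1))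
          = fun n => P * Q⁻¹ * u n - u (n + 1) := by
        funext n
        have hrec : ((R (n + 1) : ℤ) : ℝ) = P * (R n : ℝ) - (a n : ℝ) := by
          rw [hRrec n]; push_cast; ring
        rw [hudef]
        simp only []
        rw [hrec, pow_succ]
        ring
      rw [hfe]; exact h2
    have hxval : x = P * Q⁻¹ * (s + 1) - s := hx.unique hxs
    constructor
    · have hc : P * Q⁻¹ - 1 < 0 := by
        have : P * Q⁻¹ < 0 := mul_neg_of_pos_of_neg (by linarith) hQinvneg
        linarith
      have h1 : (P * Q⁻¹ - 1) * (-1 / (Q + 1)) ≤ (P * Q⁻¹ - 1) * s :=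
        mul_le_mul_of_nonpos_left hs_le hc.le
      have key : P * Q⁻¹ + (P * Q⁻¹ - 1) * (-1 / (Q + 1)) = (P + 1) / (Q + 1) := by
        field_simp
        ring
      have : x = P * Q⁻¹ + (P * Q⁻¹ - 1) * s := by rw [hxval]; ring
      linarith [this, h1, key]
    · have hc : P * Q⁻¹ - 1 < 0 := by
        have : P * Q⁻¹ < 0 := mul_neg_of_pos_of_neg (by linarith) hQinvneg
        linarith
      have h1 : (P * Q⁻¹ - 1) * s ≤ (P * Q⁻¹ - 1) * (-(-1 / (Q + 1))) :=
        mul_le_mul_of_nonpos_left hs_ge hc.le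
      have key : P * Q⁻¹ + (P * Q⁻¹ - 1) * (-(-1 / (Q + 1)))
          = (P * Q + 2 * P - Q) / (Q * (Q + 1)) := by
        field_simp
        ring
      have : x = P * Q⁻¹ + (P * Q⁻¹ - 1) * s := by rw [hxval]; ring
      linarith [this, h1, key]
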